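/- (Per-clone fidelity of the optimal qubit cloner) Define Λ(ρ) = (1/3)·ρ⊗ρ + (1/6)·ρ⊗1₂ + (1/6)·1₂⊗ρ for 2×2 complex matrices ρ. Then for every rank-one orthogonal projector ρ on ℂ², one has Tr[(ρ⊗1₂)·Λ(ρ)] = 5/6 and Tr[(1₂⊗ρ)·Λ(ρ)] = 5/6; in particular each individual clone produced by Λ passes a measurement against the original state with probability exactly 5/6. -/
import Mathlib


open Matrix Kronecker

/-- The optimal 1→2 qubit cloning map,
`Λ(ρ) = (1/3)·ρ⊗ρ + (1/6)·ρ⊗1₂ + (1/6)·1₂⊗ρ`. -/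
noncomputable def cloner (ρ : Matrix (Fin 2) (Fin 2) ℂ) :
    Matrix (Fin 2 × Fin 2) (Fin 2 × Fin 2) ℂ :=
  ((1 : ℂ)/3) • (ρ ⊗ₖ ρ) + ((1 : ℂ)/6) • (ρ ⊗ₖ (1 : Matrix (Fin 2) (Fin 2) ℂ)) +
    ((1 : ℂ)/6) • ((1 : Matrix (Fin 2) (Fin 2) ℂ) ⊗ₖ ρ)

/-- Per-clone fidelity of the optimal qubit cloner: for every rank-one orthogonal
projector `ρ` on `ℂ²`, each individual clone produced by `Λ` passes a measurement
against the original state with probability exactly `5/6`. -/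
theorem cloner_per_clone_fidelity (ρ : Matrix (Fin 2) (Fin 2) ℂ)
    (hherm : ρ.IsHermitian) (hidem : ρ * ρ = ρ) (htr : ρ.trace = 1) :
    Matrix.trace ((ρ ⊗ₖ (1 : Matrix (Fin 2) (Fin 2) ℂ)) * cloner ρ) = 5/6 ∧
    Matrix.trace (((1 : Matrix (Fin 2) (Fin 2) ℂ) ⊗ₖ ρ) * cloner ρ) = 5/6 := by
  have h1 : Matrix.trace (1 : Matrix (Fin 2) (Fin 2) ℂ) = 2 := by
    simp [Matrix.trace_one]
  constructor <;>
  · simp only [cloner, Matrix.mul_add, Matrix.mul_smul, ← Matrix.mul_kronecker_mul,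
      Matrix.one_mul, Matrix.mul_one, hidem, Matrix.trace_add, Matrix.trace_smul,
      Matrix.trace_kronecker, htr, h1]
    norm_num
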